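/- (Frankl 1983) For every n ≥ 1, every family F ⊆ 2^[n] with |F| ≥ ⌊n²/4⌋ + n + 2 admits a 3-element set T ⊆ [n] with |F|_T| ≥ 7; moreover this bound is tight, i.e., there is a family of size ⌊n²/4⌋ + n + 1 whose trace on every 3-element set has size at most 6. -/

import Mathlib

open Finset

/-- arithmetic helper -/
lemma frankl_arith (m : ℕ) (hm : 2 ≤ m) : (m - 2) ^ 2 / 4 + (m - 1) ≤ m ^ 2 / 4 := by
  rcases Nat.even_or_odd m with ⟨k, hk⟩ | ⟨k, hk⟩
  · subst hk
    have hk1 : 1 ≤ k := by omega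
    have h1 : (k + k - 2) ^ 2 = 4 * (k - 1) ^ 2 := by
      have : k + k - 2 = 2 * (k - 1) := by omega
      rw [this]; ring
    have h2 : (k + k) ^ 2 = 4 * k ^ 2 := by ring
    rw [h1, h2, Nat.mul_div_cancel_left _ (by norm_num), Nat.mul_div_cancel_left _ (by norm_num)]
    have : (k - 1) ^ 2 + (k + k - 1) = k ^ 2 := by
      obtain ⟨j, rfl⟩ : ∃ j, k = j + 1 := ⟨k - 1, by omega⟩
      have e1 : (j + 1 - 1) ^ 2 = j ^ 2 := by norm_num
      have e2 : (j + 1) ^ 2 = j ^ 2 + 2 * j + 1 := by ring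
      omega
    omega
  · subst hk
    have hk1 : 1 ≤ k := by omega
    have h1 : (2 * k + 1 - 2) ^ 2 = 4 * (k ^ 2 - k) + 1 := by
      have h : 2 * k + 1 - 2 = 2 * (k - 1) + 1 := by omega
      rw [h]
      have h2 : (2 * (k - 1) + 1) ^ 2 = 4 * ((k-1)^2 + (k-1)) + 1 := by ring
      have h3 : (k-1)^2 + (k-1) = k^2 - k := by
        obtain ⟨j, rfl⟩ : ∃ j, k = j + 1 := ⟨k - 1, by omega⟩
        have : (j+1)^2 = j^2 + 2*j+1 := by ring
        simp only [Nat.add_sub_cancel]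
        omega
      omega
    have h2 : (2 * k + 1) ^ 2 = 4 * (k ^ 2 + k) + 1 := by ring
    have hkk : k ≤ k ^ 2 := by nlinarith
    rw [h1, h2]
    omega

/-- Mantel's theorem, finset version. -/
lemma mantel {α : Type*} [DecidableEq α] :
    ∀ (m : ℕ) (V : Finset α) (E : Finset (Finset α)), V.card = m →
    (∀ e ∈ E, e ⊆ V ∧ e.card = 2) →
    (∀ a b c : α, a ≠ b → a ≠ c → b ≠ c →
      {a, b} ∈ E → {a, c} ∈ E → {b, c} ∈ E → False) →
    E.card ≤ m ^ 2 / 4 := by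
  intro m
  induction m using Nat.strong_induction_on with
  | _ m ih =>
  intro V E hV hE htri
  rcases E.eq_empty_or_nonempty with rfl | ⟨e, he⟩
  · simp
  obtain ⟨heV, hecard⟩ := hE e he
  obtain ⟨x, y, hxy, rfl⟩ := Finset.card_eq_two.1 hecard
  have hxV : x ∈ V := heV (by simp)
  have hyV : y ∈ V := heV (by simp)
  have hm2 : 2 ≤ m := by
    have : ({x, y} : Finset α).card ≤ V.card := card_le_card heV
    omega
  -- split E
  set p : Finset α → Prop := fun f => x ∈ f ∨ y ∈ f with hp
  have hsplit : (E.filter p).card + (E.filter (fun f => ¬ p f)).card = E.card :=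
    card_filter_add_card_filter_not _
  -- the far part
  have hfar : (E.filter (fun f => ¬ p f)).card ≤ (m - 2) ^ 2 / 4 := by
    refine ih (m - 2) (by omega) (V \ {x, y}) _ ?_ ?_ ?_
    · rw [card_sdiff_of_subset (by intro z hz; simp at hz; rcases hz with rfl | rfl <;> assumption)]
      simp [card_pair hxy, hV]
    · intro f hf
      simp only [mem_filter, hp, not_or] at hf
      obtain ⟨hfE, hfx, hfy⟩ := hf
      refine ⟨fun z hz => ?_, (hE f hfE).2⟩
      simp only [mem_sdiff, mem_insert, mem_singleton]
      exact ⟨(hE f hfE).1 hz, by rintro (rfl | rfl) <;> [exact hfx hz; exact hfy hz]⟩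
    · intro a b c hab hac hbc h1 h2 h3
      exact htri a b c hab hac hbc (mem_filter.1 h1).1 (mem_filter.1 h2).1 (mem_filter.1 h3).1
  -- the near part
  have hnear : (E.filter p).card ≤ m - 1 := by
    have hsub : E.filter p ⊆ (V.erase y).image
        (fun v => if v = x then {x, y} else if {x, v} ∈ E then {x, v} else ({y, v} : Finset α)) := by
      intro f hf
      simp only [mem_filter, hp] at hf
      obtain ⟨hfE, hfxy⟩ := hf
      obtain ⟨u, v, huv, hfuv⟩ := Finset.card_eq_two.1 (hE f hfE).2
      rw [mem_image]
      by_cases hxf : x ∈ f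
      · by_cases hyf : y ∈ f
        · -- f = {x, y}
          have hfeq : f = {x, y} := by
            subst hfuv
            simp only [mem_insert, mem_singleton] at hxf hyf
            rcases hxf with rfl | rfl <;> rcases hyf with rfl | rfl <;>
              first | (exact absurd rfl huv) | (exact absurd rfl hxy) | rfl |
                (rw [Finset.pair_comm])
          exact ⟨x, by simp [hxy, hxV], by simp [hfeq]⟩
        · -- f = {x, z}, z ≠ y
          have hz : ∃ z, z ≠ x ∧ z ≠ y ∧ f = {x, z} := by
            subst hfuv
            simp only [mem_insert, mem_singleton] at hxf hyf
            push_neg at hyf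
            rcases hxf with rfl | rfl
            · exact ⟨v, huv.symm, hyf.2.symm, rfl⟩
            · exact ⟨u, huv, hyf.1.symm, Finset.pair_comm u x⟩
          obtain ⟨z, hzx, hzy, rfl⟩ := hz
          refine ⟨z, ?_, ?_⟩
          · exact mem_erase.2 ⟨hzy, (hE _ hfE).1 (by simp)⟩
          · simp [hzx, hfE]
      · -- y ∈ f, f = {y, z}
        have hyf : y ∈ f := hfxy.resolve_left hxf
        have hz : ∃ z, z ≠ x ∧ z ≠ y ∧ f = {y, z} := by
          subst hfuv
          simp only [mem_insert, mem_singleton] at hyf hxf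
          push_neg at hxf
          rcases hyf with rfl | rfl
          · exact ⟨v, hxf.2.symm, huv.symm, rfl⟩
          · exact ⟨u, hxf.1.symm, huv, Finset.pair_comm u y⟩
        obtain ⟨z, hzx, hzy, rfl⟩ := hz
        have hnotE : {x, z} ∉ E := by
          intro hE'
          exact htri x y z hxy (Ne.symm hzx) (Ne.symm hzy) he hE' hfE
        refine ⟨z, mem_erase.2 ⟨hzy, (hE _ hfE).1 (by simp)⟩, by simp [hzx, hnotE]⟩
    calc (E.filter p).card ≤ _ := card_le_card hsub
      _ ≤ (V.erase y).card := card_image_le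
      _ = m - 1 := by rw [card_erase_of_mem hyV, hV]
  have := frankl_arith m hm2
  omega
open Finset

/-- If all small subsets of a 3-set T are in F, the trace on T has size ≥ 7. -/
lemma frankl_seven {n : ℕ} (F : Finset (Finset (Fin n))) (T : Finset (Fin n)) (hT : T.card = 3)
    (h : ∀ S ⊆ T, S.card ≤ 2 → S ∈ F) : 7 ≤ (F.image (· ∩ T)).card := by
  have hsub : T.powerset.erase T ⊆ F.image (· ∩ T) := by
    intro S hS
    rw [mem_erase, mem_powerset] at hS
    obtain ⟨hSne, hST⟩ := hS
    have hcard : S.card ≤ 2 := by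
      have h1 : S.card ≤ 3 := hT ▸ card_le_card hST
      rcases Nat.lt_or_ge S.card 3 with h | h
      · omega
      · exact absurd (Finset.eq_of_subset_of_card_le hST (by omega)) hSne
    exact mem_image.2 ⟨S, h S hST hcard, by rw [Finset.inter_eq_left.2 hST]⟩
  calc 7 = (T.powerset.erase T).card := by
        rw [card_erase_of_mem (mem_powerset_self T), card_powerset, hT]; norm_num
    _ ≤ _ := card_le_card hsub

/-- Counting bound for down-closed families with small traces. -/
lemma frankl_count {n : ℕ} (F : Finset (Finset (Fin n)))
    (hdown : ∀ A ∈ F, ∀ B ⊆ A, B ∈ F)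
    (htr : ∀ T : Finset (Fin n), T.card = 3 → (F.image (· ∩ T)).card ≤ 6) :
    F.card ≤ n ^ 2 / 4 + n + 1 := by
  -- every member has card ≤ 2
  have hsmall : ∀ A ∈ F, A.card ≤ 2 := by
    intro A hA
    by_contra h
    push_neg at h
    obtain ⟨T, hTA, hT3⟩ := Finset.exists_subset_card_eq (s := A) (n := 3) (by omega)
    have h7 := frankl_seven F T hT3 (fun S hST _ => hdown A hA S (hST.trans hTA))
    have h6 := htr T hT3
    omega
  -- triangle-freeness of the 2-sets
  have htri : ∀ a b c : Fin n, a ≠ b → a ≠ c → b ≠ c →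
      {a, b} ∈ F → {a, c} ∈ F → {b, c} ∈ F → False := by
    intro a b c hab hac hbc h1 h2 h3
    set T : Finset (Fin n) := {a, b, c} with hTdef
    have hT3 : T.card = 3 := by
      rw [hTdef, card_insert_of_notMem (by simp [hab, hac]),
        card_insert_of_notMem (by simp [hbc]), card_singleton]
    have h7 := frankl_seven F T hT3 ?_
    · have h6 := htr T hT3
      omega
    intro S hST hS2
    have hSne : S ≠ T := by
      intro h; rw [h, hT3] at hS2; omega
    -- S misses one of a, b, c
    by_cases ha : a ∈ S
    · by_cases hb : b ∈ S
      · by_cases hc : c ∈ S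
        · exact absurd (Finset.Subset.antisymm hST (by
            intro v hv
            simp only [hTdef, mem_insert, mem_singleton] at hv
            rcases hv with rfl | rfl | rfl <;> assumption)) hSne
        · refine hdown {a, b} h1 S (fun v hv => ?_)
          have := hST hv
          simp only [hTdef, mem_insert, mem_singleton] at this
          rcases this with rfl | rfl | rfl
          · simp
          · simp
          · exact absurd hv hc
      · refine hdown {a, c} h2 S (fun v hv => ?_)
        have := hST hv
        simp only [hTdef, mem_insert, mem_singleton] at this
        rcases this with rfl | rfl | rfl
        · simp
        · exact absurd hv hb
        · simp
    · refine hdown {b, c} h3 S (fun v hv => ?_)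
      have := hST hv
      simp only [hTdef, mem_insert, mem_singleton] at this
      rcases this with rfl | rfl | rfl
      · exact absurd hv ha
      · simp
      · simp
  -- partition by cardinality
  have hpart : F = F.filter (·.card = 0) ∪ F.filter (·.card = 1) ∪ F.filter (·.card = 2) := by
    ext A
    simp only [mem_union, mem_filter]
    constructor
    · intro hA
      have := hsmall A hA
      interval_cases h : A.card <;> simp [hA, h]
    · rintro ((h | h) | h) <;> exact h.1
  have h0 : (F.filter (·.card = 0)).card ≤ 1 := by
    refine card_le_one.2 fun A hA B hB => ?_
    simp only [mem_filter, card_eq_zero] at hA hB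
    rw [hA.2, hB.2]
  have h1 : (F.filter (·.card = 1)).card ≤ n := by
    have hsub : F.filter (·.card = 1) ⊆ (univ : Finset (Fin n)).image ({·}) := by
      intro A hA
      simp only [mem_filter, card_eq_one] at hA
      obtain ⟨v, rfl⟩ := hA.2
      exact mem_image.2 ⟨v, mem_univ v, rfl⟩
    calc (F.filter (·.card = 1)).card ≤ _ := card_le_card hsub
      _ ≤ (univ : Finset (Fin n)).card := card_image_le
      _ = n := by simp
  have h2 : (F.filter (·.card = 2)).card ≤ n ^ 2 / 4 := by
    refine mantel n univ _ (by simp) ?_ ?_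
    · intro e he
      exact ⟨subset_univ e, (mem_filter.1 he).2⟩
    · intro a b c hab hac hbc ha hb hc
      exact htri a b c hab hac hbc (mem_filter.1 ha).1 (mem_filter.1 hb).1 (mem_filter.1 hc).1
  have hle : F.card ≤ (F.filter (·.card = 0)).card + (F.filter (·.card = 1)).card
      + (F.filter (·.card = 2)).card := by
    conv_lhs => rw [hpart]
    exact (card_union_le _ _).trans (by gcongr; exact card_union_le _ _)
  omega

open Finset FinsetFamily

variable {α : Type*} [DecidableEq α]

lemma erase_inter' (s T : Finset α) (a : α) : (s ∩ T).erase a = s.erase a ∩ T := by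
  ext v; simp only [mem_erase, mem_inter]; tauto

/-- Down-compression does not increase trace size. -/
lemma trace_compression_le (a : α) (F : Finset (Finset α)) (T : Finset α) :
    ((Down.compression a F).image (· ∩ T)).card ≤ (F.image (· ∩ T)).card := by
  by_cases haT : a ∈ T
  · -- traces of compressed family sit inside compression of traces
    have hsub : (Down.compression a F).image (· ∩ T) ⊆
        Down.compression a (F.image (· ∩ T)) := by
      intro S hS
      obtain ⟨s, hs, rfl⟩ := mem_image.1 hS
      rcases Down.mem_compression.1 hs with ⟨hsF, hseF⟩ | ⟨hsF, hinsF⟩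
      · refine Down.mem_compression.2 (Or.inl ⟨mem_image_of_mem _ hsF, ?_⟩)
        rw [erase_inter']
        exact mem_image_of_mem _ hseF
      · have has : a ∉ s := fun h => hsF (by rwa [insert_eq_of_mem h] at hinsF)
        have haS : a ∉ s ∩ T := fun h => has (mem_inter.1 h).1
        have hins : insert a s ∩ T = insert a (s ∩ T) := by
          ext v; simp only [mem_inter, mem_insert]
          constructor
          · rintro ⟨rfl | hv, hvT⟩
            · exact Or.inl rfl
            · exact Or.inr ⟨hv, hvT⟩
          · rintro (rfl | ⟨hv, hvT⟩)
            · exact ⟨Or.inl rfl, haT⟩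
            · exact ⟨Or.inr hv, hvT⟩
        by_cases hmem : s ∩ T ∈ F.image (· ∩ T)
        · refine Down.mem_compression.2 (Or.inl ⟨hmem, ?_⟩)
          rwa [erase_eq_of_notMem haS]
        · refine Down.mem_compression.2 (Or.inr ⟨hmem, ?_⟩)
          rw [← hins]
          exact mem_image_of_mem _ hinsF
    calc ((Down.compression a F).image (· ∩ T)).card
        ≤ (Down.compression a (F.image (· ∩ T))).card := card_le_card hsub
      _ = (F.image (· ∩ T)).card := Down.card_compression _ _
  · -- a ∉ T : traces are unchanged
    have heq : ∀ s : Finset α, s.erase a ∩ T = s ∩ T := by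
      intro s; ext v
      simp only [mem_inter, mem_erase]
      constructor
      · rintro ⟨⟨-, hv⟩, hvT⟩; exact ⟨hv, hvT⟩
      · rintro ⟨hv, hvT⟩; exact ⟨⟨fun h => haT (h ▸ hvT), hv⟩, hvT⟩
    have : (Down.compression a F).image (· ∩ T) = F.image (· ∩ T) := by
      ext S
      simp only [mem_image]
      constructor
      · rintro ⟨s, hs, rfl⟩
        rcases Down.mem_compression.1 hs with ⟨hsF, -⟩ | ⟨-, hinsF⟩
        · exact ⟨s, hsF, rfl⟩
        · refine ⟨insert a s, hinsF, ?_⟩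
          have : insert a s ∩ T = s ∩ T := by
            rw [← heq (insert a s), erase_insert_eq_erase, heq]
          rw [this]
      · rintro ⟨s, hs, rfl⟩
        exact ⟨s.erase a, Down.erase_mem_compression hs, heq s⟩
    rw [this]

/-- Compression strictly decreases total size when not fixed. -/
lemma sum_card_compression_lt (a : α) (F : Finset (Finset α)) (A : Finset α)
    (hA : A ∈ F) (hAe : A.erase a ∉ F) :
    ∑ B ∈ Down.compression a F, B.card < ∑ B ∈ F, B.card := by
  have haA : a ∈ A := by
    by_contra h
    rw [erase_eq_of_notMem h] at hAe
    exact hAe hA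
  classical
  set p : Finset α → Prop := fun s => s.erase a ∈ F with hp
  have hmemA : ∀ B ∈ F.filter (fun s => ¬ p s), a ∈ B := by
    intro B hB
    rw [mem_filter] at hB
    by_contra h
    rw [hp] at hB
    simp only [erase_eq_of_notMem h] at hB
    exact hB.2 hB.1
  have hcomp : (Down.compression a F : Finset (Finset α)) =
      (F.filter p) ∪ ((F.filter (fun s => ¬ p s)).image (erase · a)) := by
    rw [Down.compression, disjUnion_eq_union]
    congr 1
    rw [filter_image]
  have hdisj : Disjoint (F.filter p) ((F.filter (fun s => ¬ p s)).image (erase · a)) := by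
    rw [disjoint_left]
    intro s h1 h2
    obtain ⟨t, ht, rfl⟩ := mem_image.1 h2
    exact (mem_filter.1 ht).2 ((mem_filter.1 h1).1)
  rw [hcomp, sum_union hdisj]
  have hsum : ∑ B ∈ F, B.card
      = ∑ B ∈ F.filter p, B.card + ∑ B ∈ F.filter (fun s => ¬ p s), B.card := by
    rw [sum_filter_add_sum_filter_not]
  rw [hsum]
  have hAmem : A ∈ F.filter (fun s => ¬ p s) := mem_filter.2 ⟨hA, hAe⟩
  have hlt : ∑ B ∈ (F.filter (fun s => ¬ p s)).image (erase · a), B.card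
      < ∑ B ∈ F.filter (fun s => ¬ p s), B.card := by
    calc ∑ B ∈ (F.filter (fun s => ¬ p s)).image (erase · a), B.card
        = ∑ B ∈ F.filter (fun s => ¬ p s), (B.erase a).card := by
          rw [sum_image]
          intro s hs t ht h
          have : insert a (s.erase a) = insert a (t.erase a) := by rw [show s.erase a = t.erase a from h]
          rwa [insert_erase (hmemA s hs), insert_erase (hmemA t ht)] at this
      _ < ∑ B ∈ F.filter (fun s => ¬ p s), B.card := by
          refine sum_lt_sum (fun B hB => card_le_card (erase_subset _ _)) ⟨A, hAmem, ?_⟩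
          rw [card_erase_of_mem haA]
          have : 0 < A.card := card_pos.2 ⟨a, haA⟩
          omega
  omega

variable {α : Type*} [DecidableEq α]

lemma down_of_erase (F : Finset (Finset α)) (h : ∀ A ∈ F, ∀ a, A.erase a ∈ F) :
    ∀ A ∈ F, ∀ B ⊆ A, B ∈ F := by
  suffices H : ∀ (k : ℕ) (A : Finset α), A.card ≤ k → A ∈ F → ∀ B ⊆ A, B ∈ F by
    intro A hA B hB; exact H A.card A le_rfl hA B hB
  intro k
  induction k with
  | zero =>
    intro A hA hAF B hB
    rw [Nat.le_zero, card_eq_zero] at hA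
    subst hA
    rwa [subset_empty.1 hB]
  | succ k ih =>
    intro A hA hAF B hB
    by_cases hBA : B = A
    · rwa [hBA]
    · obtain ⟨x, hxA, hxB⟩ := exists_of_ssubset (lt_of_le_of_ne hB hBA)
      refine ih (A.erase x) ?_ (h A hAF x) B ?_
      · rw [card_erase_of_mem hxA]; omega
      · intro v hv
        exact mem_erase.2 ⟨fun hvx => hxB (hvx ▸ hv), hB hv⟩

/-- Any family with small 3-traces can be replaced by a down-closed one of the same size. -/
lemma exists_lower_set (F : Finset (Finset α))
    (hP : ∀ T : Finset α, T.card = 3 → (F.image (· ∩ T)).card ≤ 6) :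
    ∃ G : Finset (Finset α), G.card = F.card ∧
      (∀ T : Finset α, T.card = 3 → (G.image (· ∩ T)).card ≤ 6) ∧
      (∀ A ∈ G, ∀ B ⊆ A, B ∈ G) := by
  classical
  set m := ∑ B ∈ F, B.card with hm
  clear_value m
  induction m using Nat.strong_induction_on generalizing F with
  | _ m ih =>
  by_cases h : ∀ A ∈ F, ∀ a, A.erase a ∈ F
  · exact ⟨F, rfl, hP, down_of_erase F h⟩
  · push_neg at h
    obtain ⟨A, hA, a, hAe⟩ := h
    have hlt := sum_card_compression_lt a F A hA hAe
    obtain ⟨G, hG1, hG2, hG3⟩ := ih (∑ B ∈ Down.compression a F, B.card) (hm ▸ hlt)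
      (Down.compression a F)
      (fun T hT => le_trans (trace_compression_le a F T) (hP T hT)) rfl
    exact ⟨G, hG1.trans (Down.card_compression a F), hG2, hG3⟩
open Finset

lemma half_mul (n : ℕ) : n / 2 * (n - n / 2) = n ^ 2 / 4 := by
  rcases Nat.even_or_odd n with ⟨k, rfl⟩ | ⟨k, rfl⟩
  · have h1 : (k + k) / 2 = k := by omega
    have h2 : (k + k) ^ 2 = 4 * (k * k) := by ring
    have h3 : k + k - k = k := by omega
    rw [h1, h2, h3, Nat.mul_div_cancel_left _ (by norm_num)]
  · have h1 : (2 * k + 1) / 2 = k := by omega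
    have h2 : (2 * k + 1) ^ 2 = 4 * (k * (k + 1)) + 1 := by ring
    have h3 : 2 * k + 1 - k = k + 1 := by omega
    rw [h1, h2, h3]
    omega

lemma frankl_construction (n : ℕ) (hn : 1 ≤ n) :
    ∃ 𝓕 : Finset (Finset (Fin n)), 𝓕.card = n ^ 2 / 4 + n + 1 ∧
      ∀ T : Finset (Fin n), T.card = 3 → (𝓕.image (· ∩ T)).card ≤ 6 := by
  classical
  set p : Fin n → Prop := fun i => (i : ℕ) < n / 2 with hp
  set L : Finset (Fin n) := univ.filter p with hL
  set R : Finset (Fin n) := univ.filter (fun i => ¬ p i) with hR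
  set E : Finset (Finset (Fin n)) :=
    (L ×ˢ R).image (fun q => ({q.1, q.2} : Finset (Fin n))) with hE
  have hLR : ∀ {x y : Fin n}, x ∈ L → y ∈ R → x ≠ y := by
    intro x y hx hy h
    rw [hL, mem_filter] at hx
    rw [hR, mem_filter] at hy
    exact hy.2 (h ▸ hx.2)
  have hEcard2 : ∀ e ∈ E, e.card = 2 := by
    intro e he
    rw [hE, mem_image] at he
    obtain ⟨⟨x, y⟩, hq, rfl⟩ := he
    rw [mem_product] at hq
    exact card_pair (hLR hq.1 hq.2)
  have hLcard : L.card = n / 2 := by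
    have himg : L.image (fun i : Fin n => (i : ℕ)) = Finset.range (n / 2) := by
      ext j
      simp only [hL, mem_image, mem_filter, mem_univ, true_and, Finset.mem_range, hp]
      constructor
      · rintro ⟨i, hi, rfl⟩; exact hi
      · intro hj
        exact ⟨⟨j, by omega⟩, hj, rfl⟩
    have := card_image_of_injective L (Fin.val_injective (n := n))
    rw [himg, Finset.card_range] at this
    omega
  have hRcard : R.card = n - n / 2 := by
    have := card_filter_add_card_filter_not (s := (univ : Finset (Fin n))) (p := p)
    simp only [card_univ, Fintype.card_fin] at this
    rw [hR]
    rw [hL] at hLcard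
    omega
  have hEcard : E.card = n ^ 2 / 4 := by
    rw [hE, card_image_of_injOn, card_product, hLcard, hRcard, half_mul]
    rintro ⟨x, y⟩ hq ⟨u, v⟩ hq' h
    rw [mem_coe, mem_product] at hq hq'
    simp only at h
    have hxy := hLR hq.1 hq.2
    have huv := hLR hq'.1 hq'.2
    have hx : x = u := by
      have hx' : x ∈ ({u, v} : Finset (Fin n)) := by rw [← h]; simp
      simp only [mem_insert, mem_singleton] at hx'
      rcases hx' with rfl | rfl
      · rfl
      · exact absurd rfl (hLR hq.1 hq'.2)
    subst hx
    have hy : y = v := by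
      have hy' : y ∈ ({x, v} : Finset (Fin n)) := by rw [← h]; simp
      simp only [mem_insert, mem_singleton] at hy'
      rcases hy' with rfl | rfl
      · exact absurd rfl hxy.symm
      · rfl
    simp [hy]
  set S1 : Finset (Finset (Fin n)) := univ.image (fun v : Fin n => ({v} : Finset (Fin n))) with hS1
  have hS1card : S1.card = n := by
    rw [hS1, card_image_of_injective _ (fun a b h => by
      simpa using Finset.singleton_injective h), card_univ, Fintype.card_fin]
  refine ⟨insert ∅ (S1 ∪ E), ?_, ?_⟩
  · have hdisj : Disjoint S1 E := by
      rw [disjoint_left]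
      intro s hs hsE
      rw [hS1, mem_image] at hs
      obtain ⟨v, -, rfl⟩ := hs
      have := hEcard2 _ hsE
      simp at this
    have hne : ∅ ∉ S1 ∪ E := by
      rw [mem_union]
      rintro (h | h)
      · rw [hS1, mem_image] at h
        obtain ⟨v, -, hv⟩ := h
        exact (singleton_ne_empty v) hv.symm.symm
      · have := hEcard2 _ h
        simp at this
    rw [card_insert_of_notMem hne, card_union_of_disjoint hdisj, hS1card, hEcard]
    omega
  · intro T hT
    -- the trace is contained in an explicit small family
    set TL := T.filter p with hTL
    set TR := T.filter (fun i => ¬ p i) with hTR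
    have hsub : (insert ∅ (S1 ∪ E)).image (· ∩ T) ⊆
        insert ∅ ((T.image fun v => ({v} : Finset (Fin n))) ∪
          (TL ×ˢ TR).image (fun q => ({q.1, q.2} : Finset (Fin n)))) := by
      intro S hS
      rw [mem_image] at hS
      obtain ⟨s, hs, rfl⟩ := hS
      rw [mem_insert, mem_union] at hs
      rcases hs with rfl | hs | hs
      · simp
      · rw [hS1, mem_image] at hs
        obtain ⟨v, -, rfl⟩ := hs
        by_cases hv : v ∈ T
        · rw [Finset.singleton_inter_of_mem hv]
          exact mem_insert.2 (Or.inr (mem_union_left _ (mem_image_of_mem _ hv)))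
        · rw [Finset.singleton_inter_of_notMem hv]
          simp
      · rw [hE, mem_image] at hs
        obtain ⟨⟨x, y⟩, hq, rfl⟩ := hs
        rw [mem_product] at hq
        rw [hL, mem_filter] at hq
        have hq2 : ¬ p y := by
          have := hq.2; rw [hR, mem_filter] at this; exact this.2
        by_cases hx : x ∈ T <;> by_cases hy : y ∈ T
        · have : ({x, y} : Finset (Fin n)) ∩ T = {x, y} := by
            rw [Finset.inter_eq_left]
            intro v hv
            simp only [mem_insert, mem_singleton] at hv
            rcases hv with rfl | rfl <;> assumption
          rw [this]
          refine mem_insert.2 (Or.inr (mem_union_right _ (mem_image.2 ⟨(x, y), ?_, rfl⟩)))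
          rw [mem_product, hTL, hTR, mem_filter, mem_filter]
          exact ⟨⟨hx, hq.1.2⟩, hy, hq2⟩
        · have : ({x, y} : Finset (Fin n)) ∩ T = {x} := by
            ext v
            simp only [mem_inter, mem_insert, mem_singleton]
            constructor
            · rintro ⟨rfl | rfl, hvT⟩
              · rfl
              · exact absurd hvT hy
            · rintro rfl; exact ⟨Or.inl rfl, hx⟩
          rw [this]
          exact mem_insert.2 (Or.inr (mem_union_left _ (mem_image_of_mem _ hx)))
        · have : ({x, y} : Finset (Fin n)) ∩ T = {y} := by
            ext v
            simp only [mem_inter, mem_insert, mem_singleton]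
            constructor
            · rintro ⟨rfl | rfl, hvT⟩
              · exact absurd hvT hx
              · rfl
            · rintro rfl; exact ⟨Or.inr rfl, hy⟩
          rw [this]
          exact mem_insert.2 (Or.inr (mem_union_left _ (mem_image_of_mem _ hy)))
        · have : ({x, y} : Finset (Fin n)) ∩ T = ∅ := by
            rw [Finset.eq_empty_iff_forall_notMem]
            intro v hv
            rw [mem_inter, mem_insert, mem_singleton] at hv
            rcases hv with ⟨rfl | rfl, hvT⟩
            · exact hx hvT
            · exact hy hvT
          rw [this]
          simp
    -- now count
    have hTLR : TL.card + TR.card = 3 := by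
      rw [hTL, hTR, card_filter_add_card_filter_not, hT]
    have hprod : TL.card * TR.card ≤ 2 := by
      have h3 : TL.card ≤ 3 := by omega
      interval_cases h : TL.card <;> omega
    calc ((insert ∅ (S1 ∪ E)).image (· ∩ T)).card
        ≤ _ := card_le_card hsub
      _ ≤ 1 + ((T.image fun v => ({v} : Finset (Fin n))) ∪
            (TL ×ˢ TR).image (fun q => ({q.1, q.2} : Finset (Fin n)))).card :=
          card_insert_le _ _ |>.trans (by omega)
      _ ≤ 1 + ((T.image fun v => ({v} : Finset (Fin n))).card +
            ((TL ×ˢ TR).image (fun q => ({q.1, q.2} : Finset (Fin n)))).card) := by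
          have := card_union_le (T.image fun v => ({v} : Finset (Fin n)))
            ((TL ×ˢ TR).image (fun q => ({q.1, q.2} : Finset (Fin n))))
          omega
      _ ≤ 1 + (3 + 2) := by
          have h1 : (T.image fun v => ({v} : Finset (Fin n))).card ≤ 3 :=
            hT ▸ card_image_le
          have h2 : ((TL ×ˢ TR).image (fun q => ({q.1, q.2} : Finset (Fin n)))).card ≤ 2 := by
            calc _ ≤ (TL ×ˢ TR).card := card_image_le
              _ = TL.card * TR.card := card_product _ _
              _ ≤ 2 := hprod
          omega
      _ = 6 := by norm_num

/-- Frankl (1983): `m(n,3,7) = ⌊n²/4⌋ + n + 2`. Every family of size at least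
`⌊n²/4⌋ + n + 2` has a 3-set with trace of size at least 7, and this is tight. -/
theorem frankl_3_7 (n : ℕ) (hn : 1 ≤ n) :
    (∀ 𝓕 : Finset (Finset (Fin n)), n ^ 2 / 4 + n + 2 ≤ 𝓕.card →
      ∃ T : Finset (Fin n), T.card = 3 ∧ 7 ≤ (𝓕.image (· ∩ T)).card) ∧
    (∃ 𝓕 : Finset (Finset (Fin n)), 𝓕.card = n ^ 2 / 4 + n + 1 ∧
      ∀ T : Finset (Fin n), T.card = 3 → (𝓕.image (· ∩ T)).card ≤ 6) := by
  constructor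
  · intro 𝓕 hcard
    by_contra h
    push_neg at h
    have hP : ∀ T : Finset (Fin n), T.card = 3 → (𝓕.image (· ∩ T)).card ≤ 6 := by
      intro T hT
      rcases Nat.lt_or_ge (𝓕.image (· ∩ T)).card 7 with h' | h'
      · omega
      · exact absurd h' (by simpa using h T hT)
    obtain ⟨G, hG1, hG2, hG3⟩ := exists_lower_set 𝓕 hP
    have := frankl_count G hG3 hG2
    omega
  · exact frankl_construction n hn
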